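/- Let T_m be the Hecke operator on quaternionic modular forms given by T_m φ(x) = Σ_{h ∈ R̂^×\H_m} φ(hx), where H_m = {h ∈ R̂ : Ô_F·N(h) ∩ O_F = m}. Then for the forms with minimal support one has T_m φ_{x,v} = Σ_{h ∈ H_m/R̂^×} φ_{h⁻¹x, v}. The proof uses the two decompositions of Γ = (B^× ∩ x⁻¹H_m y)/O_F^× as the disjoint union over h ∈ R̂^×\H_m of Γ_{x,hy}, and as the disjoint union over h ∈ H_m/R̂^× of Γ_{h⁻¹x,y}. -/

import Mathlib

open scoped Classical

/- Abstract adelic framework: `G` plays the role of `B̂^×`, `Bx` the image of `B^×`,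
`U` the compact open subgroup `R̂^×`, `Fh` the central subgroup `F̂^×`.  Then
`F^× = Bx ⊓ Fh`, `O_F^× = Bx ⊓ U` and `Ô_F^× = Fh ⊓ U`. -/

variable {G : Type*} [Group G]

/-- The set `Γ_{x,y} = B^× ∩ x⁻¹ R̂^× y` (before dividing by `O_F^×`). -/
def gammaSet (Bx U : Subgroup G) (x y : G) : Set G :=
  {γ | γ ∈ Bx ∧ ∃ u ∈ U, γ = x⁻¹ * u * y}

/-- The set `Γ'_{x,y} = B^× ∩ x⁻¹ F̂^× R̂^× y` (before dividing by `F^×`). -/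
def gamma'Set (Bx Fh U : Subgroup G) (x y : G) : Set G :=
  {γ | γ ∈ Bx ∧ ∃ f ∈ Fh, ∃ u ∈ U, γ = x⁻¹ * f * u * y}

/-- The left `OF`-orbit of `γ`. -/
def leftOrbit (OF : Subgroup G) (γ : G) : Set G := {δ | ∃ ε ∈ OF, δ = ε * γ}

/-- `Γ_{x,y}` as a set of `O_F^×`-orbits, i.e. `(B^× ∩ x⁻¹R̂^×y)/O_F^×`. -/
def Gamma (Bx U OF : Subgroup G) (x y : G) : Set (Set G) :=
  {s | ∃ γ ∈ gammaSet Bx U x y, s = leftOrbit OF γ}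

/-- The common value of `v·γ` on an orbit `s` (via a choice of representative). -/
noncomputable def orbitVal {V : Type*} [AddCommMonoid V]
    (act : V → G → V) (v : V) (s : Set G) : V :=
  if h : s.Nonempty then act v h.some else 0

/-- The quaternionic modular form `φ_{x,v}`, with `φ_{x,v}(y) = Σ_{γ ∈ Γ_{x,y}} v·γ`. -/
noncomputable def phiForm {V : Type*} [AddCommMonoid V]
    (Bx U OF : Subgroup G) (act : V → G → V) (x : G) (v : V) (y : G) : V :=
  ∑ᶠ s ∈ Gamma Bx U OF x y, orbitVal act v s

/-- The double coset `R̂^× x B^×`. -/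
def doubleCoset (U Bx : Subgroup G) (x : G) : Set G :=
  {g | ∃ u ∈ U, ∃ b ∈ Bx, g = u * x * b}

/-- The class set `cl(R) = R̂^×\B̂^×/B^×`, realized as the set of double cosets. -/
def classSet (U Bx : Subgroup G) : Set (Set G) :=
  {s | ∃ x : G, s = doubleCoset U Bx x}

/-- The weight `w_x = |Γ_x| = |Γ_{x,x}|`. -/
noncomputable def weight (Bx U OF : Subgroup G) (x : G) : ℕ :=
  Nat.card (Gamma Bx U OF x x)

/-- The height pairing `⟨φ,ψ⟩ = Σ_{x ∈ cl(R)} (1/w_x)⟨φ(x),ψ(x)⟩`. -/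
noncomputable def heightPairing {V : Type*} [NormedAddCommGroup V] [InnerProductSpace ℂ V]
    (Bx U OF : Subgroup G) (φ ψ : G → V) : ℂ :=
  ∑ᶠ s ∈ classSet U Bx,
    if h : s.Nonempty then
      (weight Bx U OF h.some : ℂ)⁻¹ * (inner ℂ (φ h.some) (ψ h.some) : ℂ)
    else 0

/-- The right cosets `U\H` of a bi-`U`-invariant set `H` (e.g. `H_m`). -/
def rightCosets (U : Subgroup G) (H : Set G) : Set (Set G) :=
  {s | ∃ h ∈ H, s = {g | ∃ u ∈ U, g = u * h}}

/-- The left cosets `H/U`. -/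
def leftCosets (U : Subgroup G) (H : Set G) : Set (Set G) :=
  {s | ∃ h ∈ H, s = {g | ∃ u ∈ U, g = h * u}}

/-- The Hecke operator `T_m φ(x) = Σ_{h ∈ R̂^×\H_m} φ(hx)`. -/
noncomputable def hecke {V : Type*} [AddCommMonoid V]
    (U : Subgroup G) (H : Set G) (φ : G → V) (x : G) : V :=
  ∑ᶠ s ∈ rightCosets U H, if h : s.Nonempty then φ (h.some * x) else 0

/-- `T_m φ_{x,v} = Σ_{h ∈ H_m/R̂^×} φ_{h⁻¹x, v}`. -/
theorem hecke_phiForm {V : Type*} [NormedAddCommGroup V] [InnerProductSpace ℂ V]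
    (Bx U OF : Subgroup G)
    (act : V → G → V)
    (hone : ∀ v : V, act v 1 = v)
    (hmul : ∀ (v : V) (g h : G), act v (g * h) = act (act v g) h)
    (htriv : ∀ (v : V), ∀ ε ∈ OF, act v ε = v)
    (hOFB : OF ≤ Bx) (hOFU : OF ≤ U)
    (hcent : ∀ ε ∈ OF, ∀ g : G, ε * g = g * ε)
    (hfin : ∀ x y : G, (Gamma Bx U OF x y).Finite)
    (H : Set G)
    (hH : ∀ u ∈ U, ∀ h ∈ H, u * h ∈ H ∧ h * u ∈ H)
    (hHfin : (rightCosets U H).Finite ∧ (leftCosets U H).Finite)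
    (x : G) (v : V) :
    ∀ y : G, hecke U H (phiForm Bx U OF act x v) y
      = ∑ᶠ s ∈ leftCosets U H,
          (if h : s.Nonempty then phiForm Bx U OF act (h.some⁻¹ * x) v y else 0) := by

  intro y
  classical
  -- the union-over-a-set-of-group-elements version of `Gamma`
  set F : Set G → Set (Set G) :=
    fun s => {t | ∃ γ, γ ∈ Bx ∧ (∃ g ∈ s, γ = x⁻¹ * g * y) ∧ t = leftOrbit OF γ} with hFdef
  have rcoset_self : ∀ h : G, h ∈ {g | ∃ u ∈ U, g = u * h} :=
    fun h => ⟨1, U.one_mem, by group⟩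
  have lcoset_self : ∀ h : G, h ∈ {g | ∃ u ∈ U, g = h * u} :=
    fun h => ⟨1, U.one_mem, by group⟩
  have rcoset_eq : ∀ h g : G, g ∈ {g' | ∃ u ∈ U, g' = u * h} →
      {g' | ∃ u ∈ U, g' = u * h} = {g' | ∃ u ∈ U, g' = u * g} := by
    rintro h g ⟨u0, hu0, rfl⟩
    ext w
    constructor
    · rintro ⟨u, hu, rfl⟩
      exact ⟨u * u0⁻¹, U.mul_mem hu (U.inv_mem hu0), by group⟩
    · rintro ⟨u, hu, rfl⟩
      exact ⟨u * u0, U.mul_mem hu hu0, by group⟩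
  have lcoset_eq : ∀ h g : G, g ∈ {g' | ∃ u ∈ U, g' = h * u} →
      {g' | ∃ u ∈ U, g' = h * u} = {g' | ∃ u ∈ U, g' = g * u} := by
    rintro h g ⟨u0, hu0, rfl⟩
    ext w
    constructor
    · rintro ⟨u, hu, rfl⟩
      exact ⟨u0⁻¹ * u, U.mul_mem (U.inv_mem hu0) hu, by group⟩
    · rintro ⟨u, hu, rfl⟩
      exact ⟨u0 * u, U.mul_mem hu0 hu, by group⟩
  -- nonemptiness of cosets
  have hner : ∀ s ∈ rightCosets U H, s.Nonempty := by
    rintro s ⟨h, hh, rfl⟩; exact ⟨h, rcoset_self h⟩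
  have hnel : ∀ s ∈ leftCosets U H, s.Nonempty := by
    rintro s ⟨h, hh, rfl⟩; exact ⟨h, lcoset_self h⟩
  -- from equality of `OF`-orbits extract a relating element of `OF`
  have orbit_rel : ∀ γ₁ γ₂ : G, leftOrbit OF γ₁ = leftOrbit OF γ₂ →
      ∃ ε ∈ OF, γ₂ = ε * γ₁ := by
    intro γ₁ γ₂ hEq
    have : γ₂ ∈ leftOrbit OF γ₁ := by
      rw [hEq]; exact ⟨1, OF.one_mem, by group⟩
    exact this
  -- the key identification for right cosets
  have key_r : ∀ s ∈ rightCosets U H, ∀ c ∈ s, Gamma Bx U OF x (c * y) = F s := by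
    rintro s ⟨h, hh, rfl⟩ c hc
    have hsc := rcoset_eq h c hc
    ext t
    constructor
    · rintro ⟨γ, ⟨hγB, u, hu, rfl⟩, rfl⟩
      refine ⟨x⁻¹ * u * (c * y), hγB, ⟨u * c, ?_, by group⟩, rfl⟩
      rw [hsc]; exact ⟨u, hu, rfl⟩
    · rintro ⟨γ, hγB, ⟨g, hg, rfl⟩, rfl⟩
      rw [hsc] at hg
      obtain ⟨u, hu, rfl⟩ := hg
      exact ⟨x⁻¹ * (u * c) * y, ⟨hγB, u, hu, by group⟩, rfl⟩
  -- the key identification for left cosets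
  have key_l : ∀ s ∈ leftCosets U H, ∀ c ∈ s, Gamma Bx U OF (c⁻¹ * x) y = F s := by
    rintro s ⟨h, hh, rfl⟩ c hc
    have hsc := lcoset_eq h c hc
    ext t
    constructor
    · rintro ⟨γ, ⟨hγB, u, hu, rfl⟩, rfl⟩
      refine ⟨(c⁻¹ * x)⁻¹ * u * y, hγB, ⟨c * u, ?_, by group⟩, rfl⟩
      rw [hsc]; exact ⟨u, hu, rfl⟩
    · rintro ⟨γ, hγB, ⟨g, hg, rfl⟩, rfl⟩
      rw [hsc] at hg
      obtain ⟨u, hu, rfl⟩ := hg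
      have hE : (c⁻¹ * x)⁻¹ * u * y = x⁻¹ * (c * u) * y := by group
      exact ⟨(c⁻¹ * x)⁻¹ * u * y, ⟨hE ▸ hγB, u, hu, rfl⟩, by rw [hE]⟩
  -- finiteness of the pieces
  have hfinFr : ∀ s ∈ rightCosets U H, (F s).Finite := by
    intro s hs
    obtain ⟨c, hc⟩ := hner s hs
    rw [← key_r s hs c hc]; exact hfin x (c * y)
  have hfinFl : ∀ s ∈ leftCosets U H, (F s).Finite := by
    intro s hs
    obtain ⟨c, hc⟩ := hnel s hs
    rw [← key_l s hs c hc]; exact hfin (c⁻¹ * x) y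
  -- pairwise disjointness
  have hdisjr : (rightCosets U H).PairwiseDisjoint F := by
    rintro s₁ hs₁ s₂ hs₂ hne
    rw [Function.onFun, Set.disjoint_left]
    rintro t ⟨γ₁, hγ₁B, ⟨g₁, hg₁, hγ₁⟩, ht₁⟩ ⟨γ₂, hγ₂B, ⟨g₂, hg₂, hγ₂⟩, ht₂⟩
    obtain ⟨ε, hε, hrel⟩ := orbit_rel γ₁ γ₂ (ht₁ ▸ ht₂)
    have e2 : x⁻¹ * g₂ * y = x⁻¹ * (ε * g₁) * y := by
      calc x⁻¹ * g₂ * y = ε * x⁻¹ * g₁ * y := by rw [← hγ₂, hrel, hγ₁]; group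
        _ = (ε * x⁻¹) * (g₁ * y) := by group
        _ = (x⁻¹ * ε) * (g₁ * y) := by rw [hcent ε hε x⁻¹]
        _ = x⁻¹ * (ε * g₁) * y := by group
    have hg : g₂ = ε * g₁ := mul_left_cancel (mul_right_cancel e2)
    obtain ⟨h₁, hh₁, rfl⟩ := hs₁
    obtain ⟨h₂, hh₂, rfl⟩ := hs₂
    apply hne
    have e₁ := rcoset_eq h₁ g₁ hg₁
    have e₂ := rcoset_eq h₂ g₂ hg₂
    have hg₂₁ : g₂ ∈ {g' | ∃ u ∈ U, g' = u * g₁} := ⟨ε, hOFU hε, hg⟩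
    rw [e₁, rcoset_eq g₁ g₂ hg₂₁, e₂]
  have hdisjl : (leftCosets U H).PairwiseDisjoint F := by
    rintro s₁ hs₁ s₂ hs₂ hne
    rw [Function.onFun, Set.disjoint_left]
    rintro t ⟨γ₁, hγ₁B, ⟨g₁, hg₁, hγ₁⟩, ht₁⟩ ⟨γ₂, hγ₂B, ⟨g₂, hg₂, hγ₂⟩, ht₂⟩
    obtain ⟨ε, hε, hrel⟩ := orbit_rel γ₁ γ₂ (ht₁ ▸ ht₂)
    have e2 : x⁻¹ * g₂ * y = x⁻¹ * (g₁ * ε) * y := by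
      calc x⁻¹ * g₂ * y = ε * x⁻¹ * g₁ * y := by rw [← hγ₂, hrel, hγ₁]; group
        _ = (ε * x⁻¹) * (g₁ * y) := by group
        _ = (x⁻¹ * ε) * (g₁ * y) := by rw [hcent ε hε x⁻¹]
        _ = x⁻¹ * (ε * g₁) * y := by group
        _ = x⁻¹ * (g₁ * ε) * y := by rw [hcent ε hε g₁]
    have hg : g₂ = g₁ * ε := mul_left_cancel (mul_right_cancel e2)
    obtain ⟨h₁, hh₁, rfl⟩ := hs₁
    obtain ⟨h₂, hh₂, rfl⟩ := hs₂
    apply hne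
    have e₁ := lcoset_eq h₁ g₁ hg₁
    have e₂ := lcoset_eq h₂ g₂ hg₂
    have hg₂₁ : g₂ ∈ {g' | ∃ u ∈ U, g' = g₁ * u} := ⟨ε, hOFU hε, hg⟩
    rw [e₁, lcoset_eq g₁ g₂ hg₂₁, e₂]
  -- both unions coincide with `F H`
  have hunr : ⋃ s ∈ rightCosets U H, F s = F H := by
    ext t
    simp only [Set.mem_iUnion, exists_prop]
    constructor
    · rintro ⟨s, ⟨h, hh, rfl⟩, γ, hγB, ⟨g, hg, hγ⟩, ht⟩
      obtain ⟨u, hu, rfl⟩ := hg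
      exact ⟨γ, hγB, ⟨u * h, (hH u hu h hh).1, hγ⟩, ht⟩
    · rintro ⟨γ, hγB, ⟨g, hg, hγ⟩, ht⟩
      exact ⟨{g' | ∃ u ∈ U, g' = u * g}, ⟨g, hg, rfl⟩,
        γ, hγB, ⟨g, rcoset_self g, hγ⟩, ht⟩
  have hunl : ⋃ s ∈ leftCosets U H, F s = F H := by
    ext t
    simp only [Set.mem_iUnion, exists_prop]
    constructor
    · rintro ⟨s, ⟨h, hh, rfl⟩, γ, hγB, ⟨g, hg, hγ⟩, ht⟩
      obtain ⟨u, hu, rfl⟩ := hg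
      exact ⟨γ, hγB, ⟨h * u, (hH u hu h hh).2, hγ⟩, ht⟩
    · rintro ⟨γ, hγB, ⟨g, hg, hγ⟩, ht⟩
      exact ⟨{g' | ∃ u ∈ U, g' = g * u}, ⟨g, hg, rfl⟩,
        γ, hγB, ⟨g, lcoset_self g, hγ⟩, ht⟩
  calc hecke U H (phiForm Bx U OF act x v) y
      = ∑ᶠ s ∈ rightCosets U H, ∑ᶠ t ∈ F s, orbitVal act v t := by
        rw [hecke]
        refine finsum_mem_congr rfl fun s hs => ?_
        rw [dif_pos (hner s hs), phiForm,
          key_r s hs (hner s hs).some (hner s hs).some_mem]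
    _ = ∑ᶠ t ∈ ⋃ s ∈ rightCosets U H, F s, orbitVal act v t :=
        (finsum_mem_biUnion hdisjr hHfin.1 hfinFr).symm
    _ = ∑ᶠ t ∈ ⋃ s ∈ leftCosets U H, F s, orbitVal act v t := by rw [hunr, hunl]
    _ = ∑ᶠ s ∈ leftCosets U H, ∑ᶠ t ∈ F s, orbitVal act v t :=
        finsum_mem_biUnion hdisjl hHfin.2 hfinFl
    _ = ∑ᶠ s ∈ leftCosets U H,
          (if h : s.Nonempty then phiForm Bx U OF act (h.some⁻¹ * x) v y else 0) := by
        refine finsum_mem_congr rfl fun s hs => ?_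
        rw [dif_pos (hnel s hs), phiForm,
          key_l s hs (hnel s hs).some (hnel s hs).some_mem]
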